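/- Let M ≥ 2, let A = (A_1,…,A_M) be a tuple of d×d real matrices, let s > 0, and let μ be a σ-invariant Borel probability measure on Σ_M satisfying the Gibbs inequality for (A,s) with some constants C > 0 and P ∈ ℝ. If μ is totally ergodic (σ^k is ergodic with respect to μ for every k ≥ 1), then μ is mixing: μ(X ∩ σ^{−n}Y) → μ(X)μ(Y) as n → ∞ for all Borel sets X, Y ⊆ Σ_M. -/

import Mathlib

open MeasureTheory Filter Topology

/-- The operator norm on square real matrices induced by the Euclidean norm. -/
noncomputable def opNorm {n : Type*} [Fintype n] [DecidableEq n]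
    (X : Matrix n n ℝ) : ℝ :=
  ‖Matrix.toEuclideanCLM (𝕜 := ℝ) X‖

/-- The spectral radius `ρ(X) = inf_{k ≥ 1} ‖X^k‖^(1/k)` (Gelfand). -/
noncomputable def specRad {n : Type*} [Fintype n] [DecidableEq n]
    (X : Matrix n n ℝ) : ℝ :=
  ⨅ k : ℕ, opNorm (X ^ (k + 1)) ^ ((1 : ℝ) / (k + 1))

/-- The product `A_{x_n} ⋯ A_{x_1}` associated to the word `x = (x_1, …, x_n)`. -/
noncomputable def wordProd {M d n : ℕ} (A : Fin M → Matrix (Fin d) (Fin d) ℝ)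
    (x : Fin n → Fin M) : Matrix (Fin d) (Fin d) ℝ :=
  (List.ofFn (fun i => A (x i))).reverse.prod

/-- The product `A_{x_n} ⋯ A_{x_1}` associated to the word `w = [x_1, …, x_n]`. -/
noncomputable def listProd {M d : ℕ} (A : Fin M → Matrix (Fin d) (Fin d) ℝ)
    (w : List (Fin M)) : Matrix (Fin d) (Fin d) ℝ :=
  ((w.map A).reverse).prod

/-- Irreducibility: no invariant subspace `U` with `0 < dim U < d`. -/
def IsIrredTuple {M d : ℕ} (A : Fin M → Matrix (Fin d) (Fin d) ℝ) : Prop :=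
  ¬ ∃ U : Submodule ℝ (Fin d → ℝ),
      (∀ i, U.map (A i).mulVecLin ≤ U) ∧ U ≠ ⊥ ∧ U ≠ ⊤

/-- The shift map on `Σ_M = {1,…,M}^ℕ`. -/
def shift {M : ℕ} : (ℕ → Fin M) → (ℕ → Fin M) := fun x n => x (n + 1)

/-- The cylinder set `[x_1 ⋯ x_n]` determined by the word `w = [x_1, …, x_n]`. -/
def cyl {M : ℕ} (w : List (Fin M)) : Set (ℕ → Fin M) :=
  {y | ∀ i : Fin w.length, y (i : ℕ) = w.get i}

/-- The Gibbs inequality for `(A, s)` with constants `C > 0`, `P ∈ ℝ`. -/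
def IsGibbs {M d : ℕ} (A : Fin M → Matrix (Fin d) (Fin d) ℝ) (s C P : ℝ)
    (μ : Measure (ℕ → Fin M)) : Prop :=
  ∀ w : List (Fin M), w ≠ [] →
    C⁻¹ * (μ (cyl w)).toReal ≤ Real.exp (-(w.length : ℝ) * P) * opNorm (listProd A w) ^ s ∧
    Real.exp (-(w.length : ℝ) * P) * opNorm (listProd A w) ^ s ≤ C * (μ (cyl w)).toReal

/-- The pressure `P(A,s) = inf_{n ≥ 1} (1/n) log Σ_{|x| = n} ‖A_{x_n} ⋯ A_{x_1}‖^s ∈ [-∞, ∞)`,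
with the convention that a term is `-∞` when the corresponding sum vanishes. -/
noncomputable def pressure {M d : ℕ} (A : Fin M → Matrix (Fin d) (Fin d) ℝ) (s : ℝ) : EReal :=
  ⨅ n : ℕ,
    if (∑ x : Fin (n + 1) → Fin M, opNorm (wordProd A x) ^ s) = 0 then (⊥ : EReal)
    else ((Real.log (∑ x : Fin (n + 1) → Fin M, opNorm (wordProd A x) ^ s) / (n + 1) : ℝ) : EReal)

namespace SGM

variable {M : ℕ}

lemma shift_iterate_apply (k : ℕ) (y : ℕ → Fin M) (j : ℕ) :
    (shift (M := M))^[k] y j = y (j + k) := by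
  induction k generalizing y j with
  | zero => rfl
  | succ k ih =>
    rw [Function.iterate_succ_apply, ih]
    simp [shift, Nat.add_assoc]

lemma measurable_shift : Measurable (shift (M := M)) :=
  measurable_pi_iff.mpr fun n => measurable_pi_apply (n + 1)

lemma measurable_shift_iterate (k : ℕ) : Measurable ((shift (M := M))^[k]) :=
  measurable_shift.iterate k

/-- Cylinder determined by a word given as a function. -/
def cylF {m : ℕ} (w : Fin m → Fin M) : Set (ℕ → Fin M) := {y | ∀ i : Fin m, y (i : ℕ) = w i}

lemma measurableSet_cylF {m : ℕ} (w : Fin m → Fin M) : MeasurableSet (cylF w) := by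
  have : cylF w = ⋂ i : Fin m, (fun y : ℕ → Fin M => y (i : ℕ)) ⁻¹' {w i} := by
    ext y; simp [cylF]
  rw [this]
  exact MeasurableSet.iInter fun i =>
    (measurable_pi_apply (i : ℕ)) (measurableSet_singleton (w i))

lemma cylF_disjoint {m : ℕ} {w w' : Fin m → Fin M} (h : w ≠ w') :
    Disjoint (cylF w) (cylF w') := by
  rw [Set.disjoint_left]
  intro y hy hy'
  exact h (funext fun i => (hy i).symm.trans (hy' i))

lemma iUnion_cylF (m : ℕ) : (⋃ w : Fin m → Fin M, cylF w) = Set.univ := by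
  ext y
  simp only [Set.mem_iUnion, Set.mem_univ, iff_true]
  exact ⟨fun i => y (i : ℕ), fun i => rfl⟩

lemma measure_eq_sum_cylF {μ : Measure (ℕ → Fin M)} (m : ℕ) {F : Set (ℕ → Fin M)}
    (hF : MeasurableSet F) :
    μ F = ∑ w : Fin m → Fin M, μ (cylF w ∩ F) := by
  have hdecomp : F = ⋃ w : Fin m → Fin M, (cylF w ∩ F) := by
    rw [← Set.iUnion_inter, iUnion_cylF, Set.univ_inter]
  conv_lhs => rw [hdecomp]
  rw [measure_iUnion ?_ fun w => (measurableSet_cylF w).inter hF]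
  · exact tsum_fintype _
  · intro w w' hww'
    exact (cylF_disjoint hww').mono Set.inter_subset_left Set.inter_subset_left

lemma mem_cyl_iff {v : List (Fin M)} {y : ℕ → Fin M} :
    y ∈ cyl v ↔ ∀ i, (h : i < v.length) → y i = v[i] := by
  constructor
  · intro hy i h
    simpa using hy ⟨i, h⟩
  · intro hy i
    simpa [List.get_eq_getElem] using hy (i : ℕ) i.isLt

lemma cylF_eq_cyl {m : ℕ} (w : Fin m → Fin M) : cylF w = cyl (List.ofFn w) := by
  ext y
  rw [mem_cyl_iff]
  constructor
  · intro hy i h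
    rw [List.getElem_ofFn]
    exact hy ⟨i, by simpa using h⟩
  · intro hy i
    have := hy (i : ℕ) (by simp)
    rwa [List.getElem_ofFn, Fin.eta] at this

lemma cyl_append (a b : List (Fin M)) :
    cyl (a ++ b) = cyl a ∩ (shift (M := M))^[a.length] ⁻¹' cyl b := by
  ext y
  simp only [Set.mem_inter_iff, Set.mem_preimage, mem_cyl_iff]
  constructor
  · intro h
    refine ⟨fun i hi => ?_, fun j hj => ?_⟩
    · have := h i (by simp; omega)
      rwa [List.getElem_append_left hi] at this
    · have := h (j + a.length) (by simp; omega)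
      rw [List.getElem_append_right (by omega)] at this
      rw [shift_iterate_apply]
      simpa using this
  · rintro ⟨h1, h2⟩ i hi
    rcases lt_or_ge i a.length with hlt | hle
    · rw [List.getElem_append_left hlt]
      exact h1 i hlt
    · rw [List.getElem_append_right hle]
      have := h2 (i - a.length) (by simp at hi; omega)
      rw [shift_iterate_apply] at this
      rwa [Nat.sub_add_cancel hle] at this

end SGM

namespace SGM

lemma listProd_append {M d : ℕ} (A : Fin M → Matrix (Fin d) (Fin d) ℝ) (a b : List (Fin M)) :
    listProd A (a ++ b) = listProd A b * listProd A a := by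
  simp [listProd, List.map_append, List.reverse_append]

lemma opNorm_nonneg {d : ℕ} (X : Matrix (Fin d) (Fin d) ℝ) : 0 ≤ opNorm X :=
  norm_nonneg _

lemma opNorm_mul_le {d : ℕ} (X Y : Matrix (Fin d) (Fin d) ℝ) :
    opNorm (X * Y) ≤ opNorm X * opNorm Y := by
  rw [opNorm, map_mul]
  exact (norm_mul_le _ _).trans_eq rfl

variable {M d : ℕ} {A : Fin M → Matrix (Fin d) (Fin d) ℝ} {s C P : ℝ}
  {μ : Measure (ℕ → Fin M)}

lemma gibbs_append (hs : 0 < s) (hC : 0 < C) (hG : IsGibbs A s C P μ)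
    [IsProbabilityMeasure μ]
    {a b : List (Fin M)} (ha : a ≠ []) (hb : b ≠ []) :
    (μ (cyl (a ++ b))).toReal ≤ C ^ 3 * (μ (cyl a)).toReal * (μ (cyl b)).toReal := by
  obtain ⟨h1ab, -⟩ := hG (a ++ b) (by simp [ha])
  obtain ⟨-, h2a⟩ := hG a ha
  obtain ⟨-, h2b⟩ := hG b hb
  set Na := opNorm (listProd A a) with hNa
  set Nb := opNorm (listProd A b) with hNb
  have hNab : opNorm (listProd A (a ++ b)) ≤ Nb * Na := by
    rw [listProd_append]; exact opNorm_mul_le _ _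
  have hrpow : opNorm (listProd A (a ++ b)) ^ s ≤ Nb ^ s * Na ^ s := by
    calc opNorm (listProd A (a ++ b)) ^ s ≤ (Nb * Na) ^ s :=
          Real.rpow_le_rpow (opNorm_nonneg _) hNab hs.le
      _ = Nb ^ s * Na ^ s := Real.mul_rpow (opNorm_nonneg _) (opNorm_nonneg _)
  have hexp : Real.exp (-((a ++ b).length : ℝ) * P)
      = Real.exp (-(a.length : ℝ) * P) * Real.exp (-(b.length : ℝ) * P) := by
    rw [← Real.exp_add]
    congr 1
    push_cast [List.length_append]
    ring
  have key : C⁻¹ * (μ (cyl (a ++ b))).toReal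
      ≤ (Real.exp (-(a.length : ℝ) * P) * Na ^ s)
        * (Real.exp (-(b.length : ℝ) * P) * Nb ^ s) := by
    refine h1ab.trans ?_
    rw [hexp]
    calc Real.exp (-(a.length : ℝ) * P) * Real.exp (-(b.length : ℝ) * P)
          * opNorm (listProd A (a ++ b)) ^ s
        ≤ Real.exp (-(a.length : ℝ) * P) * Real.exp (-(b.length : ℝ) * P)
          * (Nb ^ s * Na ^ s) := by
          apply mul_le_mul_of_nonneg_left hrpow
          positivity
      _ = (Real.exp (-(a.length : ℝ) * P) * Na ^ s)
        * (Real.exp (-(b.length : ℝ) * P) * Nb ^ s) := by ring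
  have h2 : (Real.exp (-(a.length : ℝ) * P) * Na ^ s)
        * (Real.exp (-(b.length : ℝ) * P) * Nb ^ s)
      ≤ (C * (μ (cyl a)).toReal) * (C * (μ (cyl b)).toReal) := by
    refine mul_le_mul h2a h2b ?_ (mul_nonneg hC.le ENNReal.toReal_nonneg)
    exact mul_nonneg (Real.exp_pos _).le (Real.rpow_nonneg (hNb ▸ opNorm_nonneg _) _)
  have hfin := key.trans h2
  have := mul_le_mul_of_nonneg_left hfin hC.le
  calc (μ (cyl (a ++ b))).toReal = C * (C⁻¹ * (μ (cyl (a ++ b))).toReal) := by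
        field_simp
    _ ≤ C * (C * (μ (cyl a)).toReal * (C * (μ (cyl b)).toReal)) := by
        apply mul_le_mul_of_nonneg_left _ hC.le
        exact key.trans h2
    _ = C ^ 3 * (μ (cyl a)).toReal * (μ (cyl b)).toReal := by ring

lemma C_ge_one (hs : 0 < s) (hC : 0 < C) (hG : IsGibbs A s C P μ)
    [IsProbabilityMeasure μ] (hM : 0 < M) : 1 ≤ C := by
  -- some length-1 cylinder has positive measure
  have h1 : (μ (Set.univ : Set (ℕ → Fin M))) = ∑ w : Fin 1 → Fin M, μ (cylF w ∩ Set.univ) :=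
    measure_eq_sum_cylF 1 MeasurableSet.univ
  simp only [Set.inter_univ, measure_univ] at h1
  have : ∃ w : Fin 1 → Fin M, μ (cylF w) ≠ 0 := by
    by_contra h
    push_neg at h
    simp [h] at h1
  obtain ⟨w, hw⟩ := this
  have hpos : 0 < (μ (cylF w)).toReal := by
    refine ENNReal.toReal_pos hw (measure_ne_top _ _)
  rw [cylF_eq_cyl] at hpos
  obtain ⟨hA1, hA2⟩ := hG (List.ofFn w) (by simp [List.ofFn_eq_nil_iff])
  have hle : C⁻¹ * (μ (cyl (List.ofFn w))).toReal ≤ C * (μ (cyl (List.ofFn w))).toReal :=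
    hA1.trans hA2
  have hinv : C⁻¹ ≤ C := le_of_mul_le_mul_right (by linarith [hle]) hpos
  nlinarith [inv_mul_cancel₀ (ne_of_gt hC)]

end SGM

namespace SGM

variable {M d : ℕ} {A : Fin M → Matrix (Fin d) (Fin d) ℝ} {s C P : ℝ}
  {μ : Measure (ℕ → Fin M)}

lemma gibbs_append' (hs : 0 < s) (hC : 0 < C) (hG : IsGibbs A s C P μ)
    [IsProbabilityMeasure μ]
    {a b : List (Fin M)} (ha : a ≠ []) (hb : b ≠ []) :
    μ (cyl (a ++ b)) ≤ ENNReal.ofReal (C ^ 3) * μ (cyl a) * μ (cyl b) := by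
  have h := gibbs_append hs hC hG ha hb
  calc μ (cyl (a ++ b)) = ENNReal.ofReal ((μ (cyl (a ++ b))).toReal) :=
        (ENNReal.ofReal_toReal (measure_ne_top _ _)).symm
    _ ≤ ENNReal.ofReal (C ^ 3 * (μ (cyl a)).toReal * (μ (cyl b)).toReal) :=
        ENNReal.ofReal_le_ofReal h
    _ = ENNReal.ofReal (C ^ 3) * μ (cyl a) * μ (cyl b) := by
        rw [ENNReal.ofReal_mul (by positivity), ENNReal.ofReal_mul (by positivity),
          ENNReal.ofReal_toReal (measure_ne_top _ _), ENNReal.ofReal_toReal (measure_ne_top _ _)]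

/-- Partition of a measurable set via preimages of level-`r` cylinders. -/
lemma measure_eq_sum_inter_preimage {μ : Measure (ℕ → Fin M)} (m r : ℕ)
    {B : Set (ℕ → Fin M)} (hB : MeasurableSet B) :
    μ B = ∑ u : Fin r → Fin M, μ (B ∩ (shift (M := M))^[m] ⁻¹' cylF u) := by
  have hdecomp : B = ⋃ u : Fin r → Fin M, (B ∩ (shift (M := M))^[m] ⁻¹' cylF u) := by
    rw [← Set.inter_iUnion, ← Set.preimage_iUnion, iUnion_cylF, Set.preimage_univ,
      Set.inter_univ]
  conv_lhs => rw [hdecomp]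
  rw [measure_iUnion ?_ fun u => hB.inter ((measurable_shift_iterate m) (measurableSet_cylF u))]
  · exact tsum_fintype _
  · intro u u' huu'
    exact ((cylF_disjoint huu').preimage _).mono Set.inter_subset_right Set.inter_subset_right

lemma corr_cylF (hs : 0 < s) (hC : 0 < C) (hG : IsGibbs A s C P μ)
    [IsProbabilityMeasure μ] {m q : ℕ} (hm : 0 < m) (hq : 0 < q)
    (w : Fin m → Fin M) (v : Fin q → Fin M) {n : ℕ} (hn : m ≤ n) :
    μ (cylF w ∩ (shift (M := M))^[n] ⁻¹' cylF v)
      ≤ ENNReal.ofReal (C ^ 3) * μ (cylF w) * μ (cylF v) := by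
  obtain ⟨r, rfl⟩ := Nat.le.dest hn
  -- each piece is a cylinder
  have hpiece : ∀ u : Fin r → Fin M,
      cylF w ∩ (shift (M := M))^[m] ⁻¹' cylF u ∩ (shift (M := M))^[m + r] ⁻¹' cylF v
        = cyl ((List.ofFn w ++ List.ofFn u) ++ List.ofFn v) := by
    intro u
    rw [cyl_append, cyl_append]
    simp only [List.length_append, List.length_ofFn, ← cylF_eq_cyl]
  have hpiece2 : ∀ u : Fin r → Fin M,
      cylF w ∩ (shift (M := M))^[m] ⁻¹' cylF u = cyl (List.ofFn w ++ List.ofFn u) := by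
    intro u
    rw [cyl_append]
    simp only [List.length_ofFn, ← cylF_eq_cyl]
  have hXdecomp : μ (cylF w ∩ (shift (M := M))^[m + r] ⁻¹' cylF v)
      = ∑ u : Fin r → Fin M,
          μ (cylF w ∩ (shift (M := M))^[m] ⁻¹' cylF u ∩ (shift (M := M))^[m + r] ⁻¹' cylF v) := by
    have := measure_eq_sum_inter_preimage (μ := μ) m r
      ((measurableSet_cylF w).inter ((measurable_shift_iterate (m + r)) (measurableSet_cylF v)))
    rw [this]
    congr 1
    ext u
    congr 1
    ext y
    simp only [Set.mem_inter_iff, Set.mem_preimage]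
    tauto
  rw [hXdecomp]
  have hbound : ∀ u : Fin r → Fin M,
      μ (cylF w ∩ (shift (M := M))^[m] ⁻¹' cylF u ∩ (shift (M := M))^[m + r] ⁻¹' cylF v)
        ≤ ENNReal.ofReal (C ^ 3) * μ (cylF w ∩ (shift (M := M))^[m] ⁻¹' cylF u) * μ (cylF v) := by
    intro u
    rw [hpiece u, hpiece2 u]
    have ha : List.ofFn w ++ List.ofFn u ≠ [] := by
      simp [List.ofFn_eq_nil_iff]
      omega
    have hb : List.ofFn v ≠ [] := by
      simp [List.ofFn_eq_nil_iff]
      omega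
    have := gibbs_append' hs hC hG ha hb
    rwa [← cylF_eq_cyl (w := v)] at this
  calc ∑ u : Fin r → Fin M,
        μ (cylF w ∩ (shift (M := M))^[m] ⁻¹' cylF u ∩ (shift (M := M))^[m + r] ⁻¹' cylF v)
      ≤ ∑ u : Fin r → Fin M,
        ENNReal.ofReal (C ^ 3) * μ (cylF w ∩ (shift (M := M))^[m] ⁻¹' cylF u) * μ (cylF v) :=
        Finset.sum_le_sum fun u _ => hbound u
    _ = ENNReal.ofReal (C ^ 3) * μ (cylF w) * μ (cylF v) := by
        rw [measure_eq_sum_inter_preimage (μ := μ) m r (measurableSet_cylF w),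
          Finset.mul_sum, Finset.sum_mul]

end SGM

namespace SGM

variable {M : ℕ}

/-- Finite-level approximant sets. -/
def projCyl (m : ℕ) (S : Finset (Fin m → Fin M)) : Set (ℕ → Fin M) :=
  {y | (fun i : Fin m => y (i : ℕ)) ∈ S}

lemma projCyl_eq_biUnion (m : ℕ) (S : Finset (Fin m → Fin M)) :
    projCyl m S = ⋃ w ∈ S, cylF w := by
  ext y
  simp only [projCyl, Set.mem_setOf_eq, Set.mem_iUnion, cylF]
  constructor
  · intro h
    exact ⟨fun i => y (i : ℕ), h, fun i => rfl⟩
  · rintro ⟨w, hw, h⟩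
    have : (fun i : Fin m => y (i : ℕ)) = w := funext h
    rwa [this]

lemma measurableSet_projCyl (m : ℕ) (S : Finset (Fin m → Fin M)) :
    MeasurableSet (projCyl m S) := by
  rw [projCyl_eq_biUnion]
  exact Set.Finite.measurableSet_biUnion S.finite_toSet fun w _ => measurableSet_cylF w

lemma measure_projCyl {μ : Measure (ℕ → Fin M)} (m : ℕ) (S : Finset (Fin m → Fin M)) :
    μ (projCyl m S) = ∑ w ∈ S, μ (cylF w) := by
  rw [projCyl_eq_biUnion]
  exact measure_biUnion_finset
    (fun w _ w' _ hww' => cylF_disjoint hww')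
    (fun w _ => measurableSet_cylF w)

lemma compl_projCyl (m : ℕ) (S : Finset (Fin m → Fin M)) :
    (projCyl m S)ᶜ = projCyl m Sᶜ := by
  ext y
  simp [projCyl]

lemma projCyl_lift (m k : ℕ) (S : Finset (Fin m → Fin M)) :
    projCyl m S = projCyl (m + k)
      ((Finset.univ.filter fun w : Fin (m + k) → Fin M =>
        (fun i : Fin m => w (Fin.castLE (Nat.le_add_right m k) i)) ∈ S)) := by
  ext y
  simp [projCyl]

lemma projCyl_union (m : ℕ) (S T : Finset (Fin m → Fin M)) :
    projCyl m S ∪ projCyl m T = projCyl m (S ∪ T) := by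
  ext y
  simp [projCyl]

/-- admits finite-level approximations in measure -/
def Approx (μ : Measure (ℕ → Fin M)) (B : Set (ℕ → Fin M)) : Prop :=
  MeasurableSet B ∧ ∀ ε : ENNReal, 0 < ε →
    ∃ m S, 0 < m ∧ μ (symmDiff B (projCyl m S)) < ε

lemma approx_empty (μ : Measure (ℕ → Fin M)) : Approx μ ∅ := by
  refine ⟨MeasurableSet.empty, fun ε hε => ⟨1, ∅, one_pos, ?_⟩⟩
  have : projCyl (M := M) 1 ∅ = ∅ := by ext y; simp [projCyl]
  rw [this]
  simpa [symmDiff_self] using hε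

lemma approx_compl {μ : Measure (ℕ → Fin M)} {B : Set (ℕ → Fin M)} (h : Approx μ B) :
    Approx μ Bᶜ := by
  refine ⟨h.1.compl, fun ε hε => ?_⟩
  obtain ⟨m, S, hm, hS⟩ := h.2 ε hε
  refine ⟨m, Sᶜ, hm, ?_⟩
  rwa [← compl_projCyl, compl_symmDiff_compl]

lemma approx_union {μ : Measure (ℕ → Fin M)} {B₁ B₂ : Set (ℕ → Fin M)}
    (h₁ : Approx μ B₁) (h₂ : Approx μ B₂) : Approx μ (B₁ ∪ B₂) := by
  refine ⟨h₁.1.union h₂.1, fun ε hε => ?_⟩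
  obtain ⟨m₁, S₁, hm₁, hS₁⟩ := h₁.2 (ε / 2) (ENNReal.half_pos hε.ne')
  obtain ⟨m₂, S₂, hm₂, hS₂⟩ := h₂.2 (ε / 2) (ENNReal.half_pos hε.ne')
  -- lift both to level m₁ + m₂... use max via lifting
  obtain ⟨k₁, hk₁⟩ := Nat.le.dest (Nat.le_max_left m₁ m₂)
  obtain ⟨k₂, hk₂⟩ := Nat.le.dest (Nat.le_max_right m₁ m₂)
  set m := max m₁ m₂ with hm
  have e₁ : ∃ T₁ : Finset (Fin m → Fin M), projCyl m₁ S₁ = projCyl m T₁ := by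
    rw [← hk₁]; exact ⟨_, projCyl_lift m₁ k₁ S₁⟩
  have e₂ : ∃ T₂ : Finset (Fin m → Fin M), projCyl m₂ S₂ = projCyl m T₂ := by
    rw [← hk₂]; exact ⟨_, projCyl_lift m₂ k₂ S₂⟩
  obtain ⟨T₁, hT₁⟩ := e₁
  obtain ⟨T₂, hT₂⟩ := e₂
  refine ⟨m, T₁ ∪ T₂, lt_of_lt_of_le hm₁ (Nat.le_max_left _ _), ?_⟩
  rw [← projCyl_union]
  have hsub : symmDiff (B₁ ∪ B₂) (projCyl m T₁ ∪ projCyl m T₂)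
      ⊆ symmDiff B₁ (projCyl m T₁) ∪ symmDiff B₂ (projCyl m T₂) := by
    intro y
    simp only [Set.mem_symmDiff, Set.mem_union]
    tauto
  calc μ (symmDiff (B₁ ∪ B₂) (projCyl m T₁ ∪ projCyl m T₂))
      ≤ μ (symmDiff B₁ (projCyl m T₁) ∪ symmDiff B₂ (projCyl m T₂)) := measure_mono hsub
    _ ≤ μ (symmDiff B₁ (projCyl m T₁)) + μ (symmDiff B₂ (projCyl m T₂)) := measure_union_le _ _
    _ < ε / 2 + ε / 2 := by
        rw [← hT₁, ← hT₂]
        exact ENNReal.add_lt_add hS₁ hS₂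
    _ = ε := ENNReal.add_halves ε

lemma approx_iUnion {μ : Measure (ℕ → Fin M)} [IsProbabilityMeasure μ]
    {f : ℕ → Set (ℕ → Fin M)} (hf : ∀ i, Approx μ (f i)) : Approx μ (⋃ i, f i) := by
  have hmeas : MeasurableSet (⋃ i, f i) := MeasurableSet.iUnion fun i => (hf i).1
  refine ⟨hmeas, fun ε hε => ?_⟩
  set G : ℕ → Set (ℕ → Fin M) := fun N => ⋃ i ∈ Finset.range N, f i with hG
  have hGapprox : ∀ N, Approx μ (G N) := by
    intro N
    induction N with
    | zero =>
      have h0 : G 0 = ∅ := by simp [hG]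
      rw [h0]; exact approx_empty μ
    | succ N ih =>
      have : G (N + 1) = G N ∪ f N := by
        simp only [hG, Finset.range_add_one, Finset.set_biUnion_insert]
        rw [Set.union_comm]
      rw [this]
      exact approx_union ih (hf N)
  have hmono : Monotone G := by
    intro a b hab y hy
    simp only [hG, Set.mem_iUnion, Finset.mem_range] at hy ⊢
    obtain ⟨i, hi, h⟩ := hy
    exact ⟨i, by omega, h⟩
  have hGset : ⋃ N, G N = ⋃ i, f i := by
    ext y
    simp only [hG, Set.mem_iUnion, Finset.mem_range]
    constructor
    · rintro ⟨N, i, -, h⟩; exact ⟨i, h⟩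
    · rintro ⟨i, h⟩; exact ⟨i + 1, i, by omega, h⟩
  have htendsto : Tendsto (fun N => μ (G N)) atTop (𝓝 (μ (⋃ i, f i))) := by
    rw [← hGset]
    exact tendsto_measure_iUnion_atTop hmono
  have hlt : μ (⋃ i, f i) < μ (⋃ i, f i) + ε / 2 :=
    ENNReal.lt_add_right (measure_ne_top _ _) (ENNReal.half_pos hε.ne').ne'
  have h2 : Tendsto (fun N => μ (G N) + ε / 2) atTop (𝓝 (μ (⋃ i, f i) + ε / 2)) :=
    htendsto.add tendsto_const_nhds
  obtain ⟨N, hN⟩ := (h2.eventually (lt_mem_nhds hlt)).exists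
  -- μ ((⋃ i, f i) \ G N) < ε / 2
  have hdiff : μ ((⋃ i, f i) \ G N) < ε / 2 := by
    apply measure_diff_lt_of_lt_add ?_ ?_ (measure_ne_top _ _) hN
    · exact (hGapprox N).1.nullMeasurableSet
    · rw [← hGset]; exact Set.subset_iUnion G N
  obtain ⟨m, S, hm, hS⟩ := (hGapprox N).2 (ε / 2) (ENNReal.half_pos hε.ne')
  refine ⟨m, S, hm, ?_⟩
  calc μ (symmDiff (⋃ i, f i) (projCyl m S))
      ≤ μ (symmDiff (⋃ i, f i) (G N)) + μ (symmDiff (G N) (projCyl m S)) :=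
        measure_symmDiff_le _ _ _
    _ < ε / 2 + ε / 2 := by
        apply ENNReal.add_lt_add _ hS
        have : symmDiff (⋃ i, f i) (G N) = (⋃ i, f i) \ G N := by
          apply symmDiff_of_ge
          rw [← hGset]
          exact Set.subset_iUnion G N
        rwa [this]
    _ = ε := ENNReal.add_halves ε

/-- Every measurable set can be approximated by finite-level sets. -/
lemma approx_of_measurableSet {μ : Measure (ℕ → Fin M)} [IsProbabilityMeasure μ]
    {B : Set (ℕ → Fin M)} (hB : MeasurableSet B) : Approx μ B := by
  classical
  let m0 : MeasurableSpace (ℕ → Fin M) :=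
    { MeasurableSet' := Approx μ
      measurableSet_empty := approx_empty μ
      measurableSet_compl := fun _ h => approx_compl h
      measurableSet_iUnion := fun _ h => approx_iUnion h }
  have hle : (MeasurableSpace.pi : MeasurableSpace (ℕ → Fin M)) ≤ m0 := by
    have : (MeasurableSpace.pi : MeasurableSpace (ℕ → Fin M)) ≤ m0 := by
      refine iSup_le fun i => ?_
      intro B hB
      obtain ⟨s, -, rfl⟩ := hB
      -- show `Approx μ ((fun y => y i) ⁻¹' s)`
      have key : (fun y : ℕ → Fin M => y i) ⁻¹' s
          = projCyl (i + 1) (Finset.univ.filter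
              fun w : Fin (i + 1) → Fin M => w ⟨i, Nat.lt_succ_self i⟩ ∈ s) := by
        ext y
        simp [projCyl]
      rw [key]
      refine ⟨measurableSet_projCyl _ _, fun ε hε =>
        ⟨i + 1, Finset.univ.filter
          (fun w : Fin (i + 1) → Fin M => w ⟨i, Nat.lt_succ_self i⟩ ∈ s),
          Nat.succ_pos i, ?_⟩⟩
      simpa [symmDiff_self] using hε
    exact this
  exact hle B hB

end SGM

namespace SGM

variable {M d : ℕ} {A : Fin M → Matrix (Fin d) (Fin d) ℝ} {s C P : ℝ}
  {μ : Measure (ℕ → Fin M)}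

/-- epsilon helper -/
lemma le_of_forall_eps {a b K' : ENNReal} (hK : K' ≠ ⊤) (h : ∀ ε : ENNReal, 0 < ε → ε ≠ ⊤ → a ≤ b + K' * ε) :
    a ≤ b := by
  apply ENNReal.le_of_forall_pos_le_add
  intro δ hδ hb
  have hδ' : (δ : ENNReal) ≠ 0 := by exact_mod_cast hδ.ne'
  have hden : K' + 1 ≠ 0 := by simp
  have hdentop : K' + 1 ≠ ⊤ := by simp [hK]
  set ε : ENNReal := (δ : ENNReal) / (K' + 1) with hε
  have hεpos : 0 < ε := ENNReal.div_pos hδ' hdentop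
  have hεtop : ε ≠ ⊤ := by
    simp only [hε]
    exact (ENNReal.div_lt_top ENNReal.coe_ne_top hden).ne
  refine (h ε hεpos hεtop).trans ?_
  have : K' * ε ≤ (K' + 1) * ε := mul_le_mul_of_nonneg_right le_self_add (by positivity)
  refine add_le_add_right (this.trans ?_) b
  exact ENNReal.mul_div_le

lemma corr_projCyl_cylF (hs : 0 < s) (hC : 0 < C) (hG : IsGibbs A s C P μ)
    [IsProbabilityMeasure μ] {m q : ℕ} (hm : 0 < m) (hq : 0 < q)
    (S : Finset (Fin m → Fin M)) (v : Fin q → Fin M) {n : ℕ} (hn : m ≤ n) :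
    μ (projCyl m S ∩ (shift (M := M))^[n] ⁻¹' cylF v)
      ≤ ENNReal.ofReal (C ^ 3) * μ (projCyl m S) * μ (cylF v) := by
  have hdecomp : projCyl m S ∩ (shift (M := M))^[n] ⁻¹' cylF v
      = ⋃ w ∈ S, (cylF w ∩ (shift (M := M))^[n] ⁻¹' cylF v) := by
    rw [projCyl_eq_biUnion, Set.iUnion₂_inter]
  rw [hdecomp, measure_biUnion_finset
    (fun w _ w' _ hww' => ((cylF_disjoint hww').mono Set.inter_subset_left Set.inter_subset_left))
    (fun w _ => (measurableSet_cylF w).inter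
      ((measurable_shift_iterate n) (measurableSet_cylF v))),
    measure_projCyl, Finset.mul_sum, Finset.sum_mul]
  exact Finset.sum_le_sum fun w _ => corr_cylF hs hC hG hm hq w v hn

lemma corr_projCyl_projCyl (hs : 0 < s) (hC : 0 < C) (hG : IsGibbs A s C P μ)
    [IsProbabilityMeasure μ] {m q : ℕ} (hm : 0 < m) (hq : 0 < q)
    (S : Finset (Fin m → Fin M)) (T : Finset (Fin q → Fin M)) {n : ℕ} (hn : m ≤ n) :
    μ (projCyl m S ∩ (shift (M := M))^[n] ⁻¹' projCyl q T)
      ≤ ENNReal.ofReal (C ^ 3) * μ (projCyl m S) * μ (projCyl q T) := by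
  have hdecomp : projCyl m S ∩ (shift (M := M))^[n] ⁻¹' projCyl q T
      = ⋃ v ∈ T, (projCyl m S ∩ (shift (M := M))^[n] ⁻¹' cylF v) := by
    rw [projCyl_eq_biUnion (m := q), Set.preimage_iUnion₂, Set.inter_iUnion₂]
  rw [hdecomp, measure_biUnion_finset
    (fun v _ v' _ hvv' => (((cylF_disjoint hvv').preimage _).mono
      Set.inter_subset_right Set.inter_subset_right))
    (fun v _ => (measurableSet_projCyl m S).inter
      ((measurable_shift_iterate n) (measurableSet_cylF v))),
    measure_projCyl (m := q), Finset.mul_sum]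
  exact Finset.sum_le_sum fun v _ => corr_projCyl_cylF hs hC hG hm hq S v hn

lemma corr_projCyl_measurable (hs : 0 < s) (hC : 0 < C) (hG : IsGibbs A s C P μ)
    [IsProbabilityMeasure μ] (hinv : MeasurePreserving (shift (M := M)) μ μ)
    {m : ℕ} (hm : 0 < m) (S : Finset (Fin m → Fin M)) {F : Set (ℕ → Fin M)}
    (hF : MeasurableSet F) {n : ℕ} (hn : m ≤ n) :
    μ (projCyl m S ∩ (shift (M := M))^[n] ⁻¹' F)
      ≤ ENNReal.ofReal (C ^ 3) * μ (projCyl m S) * μ F := by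
  set K' : ENNReal := ENNReal.ofReal (C ^ 3) with hK'
  have hKtop : K' ≠ ⊤ := ENNReal.ofReal_ne_top
  apply le_of_forall_eps (K' := K' + 1) (by simp [hKtop])
  intro ε hε hεtop
  obtain ⟨q, T, hq, hT⟩ := (approx_of_measurableSet (μ := μ) hF).2 ε hε
  set G := projCyl q T with hGdef
  have hsub : projCyl m S ∩ (shift (M := M))^[n] ⁻¹' F
      ⊆ (projCyl m S ∩ (shift (M := M))^[n] ⁻¹' G) ∪ (shift (M := M))^[n] ⁻¹' (symmDiff F G) := by
    intro y ⟨hy1, hy2⟩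
    by_cases hyG : (shift (M := M))^[n] y ∈ G
    · exact Or.inl ⟨hy1, hyG⟩
    · exact Or.inr (Or.inl ⟨hy2, hyG⟩)
  have hpre : μ ((shift (M := M))^[n] ⁻¹' (symmDiff F G)) = μ (symmDiff F G) :=
    (hinv.iterate n).measure_preimage
      ((hF.symmDiff (measurableSet_projCyl q T)).nullMeasurableSet)
  have hμG : μ G ≤ μ F + ε := by
    have : G ⊆ F ∪ symmDiff F G := by
      intro y hy
      by_cases hyF : y ∈ F
      · exact Or.inl hyF
      · exact Or.inr (Or.inr ⟨hy, hyF⟩)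
    calc μ G ≤ μ (F ∪ symmDiff F G) := measure_mono this
      _ ≤ μ F + μ (symmDiff F G) := measure_union_le _ _
      _ ≤ μ F + ε := add_le_add_right hT.le _
  calc μ (projCyl m S ∩ (shift (M := M))^[n] ⁻¹' F)
      ≤ μ (projCyl m S ∩ (shift (M := M))^[n] ⁻¹' G)
        + μ ((shift (M := M))^[n] ⁻¹' (symmDiff F G)) :=
        (measure_mono hsub).trans (measure_union_le _ _)
    _ ≤ K' * μ (projCyl m S) * μ G + ε := by
        rw [hpre]
        exact add_le_add (corr_projCyl_projCyl hs hC hG hm hq S T hn) hT.le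
    _ ≤ K' * μ (projCyl m S) * (μ F + ε) + ε := by
        gcongr
    _ ≤ K' * μ (projCyl m S) * μ F + (K' + 1) * ε := by
        have hX1 : μ (projCyl m S) ≤ 1 := prob_le_one
        have hKe : K' * μ (projCyl m S) * ε ≤ K' * ε := by
          calc K' * μ (projCyl m S) * ε ≤ K' * 1 * ε := by gcongr
            _ = K' * ε := by rw [mul_one]
        calc K' * μ (projCyl m S) * (μ F + ε) + ε
            = K' * μ (projCyl m S) * μ F + (K' * μ (projCyl m S) * ε + ε) := by ring
          _ ≤ K' * μ (projCyl m S) * μ F + (K' * ε + ε) := by gcongr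
          _ = K' * μ (projCyl m S) * μ F + (K' + 1) * ε := by ring

/-- Tail sets: exact preimages at every time. -/
def IsTail {M : ℕ} (E : Set (ℕ → Fin M)) : Prop :=
  MeasurableSet E ∧ ∀ n : ℕ, ∃ F, MeasurableSet F ∧ E = (shift (M := M))^[n] ⁻¹' F

lemma tail_bound (hs : 0 < s) (hC : 0 < C) (hG : IsGibbs A s C P μ)
    [IsProbabilityMeasure μ] (hinv : MeasurePreserving (shift (M := M)) μ μ)
    {E : Set (ℕ → Fin M)} (hE : IsTail E) {B : Set (ℕ → Fin M)} (hB : MeasurableSet B) :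
    μ (B ∩ E) ≤ ENNReal.ofReal (C ^ 3) * μ B * μ E := by
  set K' : ENNReal := ENNReal.ofReal (C ^ 3) with hK'
  have hKtop : K' ≠ ⊤ := ENNReal.ofReal_ne_top
  apply le_of_forall_eps (K' := K' * μ E + 1)
    (ENNReal.add_ne_top.mpr ⟨ENNReal.mul_ne_top hKtop (measure_ne_top μ E), ENNReal.one_ne_top⟩)
  intro ε hε hεtop
  obtain ⟨m, S, hm, hS⟩ := (approx_of_measurableSet (μ := μ) hB).2 ε hε
  set X := projCyl m S with hXdef
  obtain ⟨F, hFmeas, hFeq⟩ := hE.2 m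
  have hμF : μ F = μ E := by
    rw [hFeq]
    exact ((hinv.iterate m).measure_preimage hFmeas.nullMeasurableSet).symm
  have h1 : μ (B ∩ E) ≤ μ (X ∩ E) + ε := by
    have hsub : B ∩ E ⊆ (X ∩ E) ∪ symmDiff B X := by
      intro y ⟨hy1, hy2⟩
      by_cases hyX : y ∈ X
      · exact Or.inl ⟨hyX, hy2⟩
      · exact Or.inr (Or.inl ⟨hy1, hyX⟩)
    calc μ (B ∩ E) ≤ μ (X ∩ E) + μ (symmDiff B X) :=
          (measure_mono hsub).trans (measure_union_le _ _)
      _ ≤ μ (X ∩ E) + ε := add_le_add_right hS.le _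
  have h2 : μ (X ∩ E) ≤ K' * μ X * μ E := by
    have := corr_projCyl_measurable hs hC hG hinv hm S hFmeas (le_refl m)
    rw [← hFeq] at this
    rwa [hμF] at this
  have hμX : μ X ≤ μ B + ε := by
    have : X ⊆ B ∪ symmDiff B X := by
      intro y hy
      by_cases hyB : y ∈ B
      · exact Or.inl hyB
      · exact Or.inr (Or.inr ⟨hy, hyB⟩)
    calc μ X ≤ μ B + μ (symmDiff B X) := (measure_mono this).trans (measure_union_le _ _)
      _ ≤ μ B + ε := add_le_add_right hS.le _
  calc μ (B ∩ E) ≤ K' * μ X * μ E + ε := h1.trans (add_le_add_left h2 ε)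
    _ ≤ K' * (μ B + ε) * μ E + ε := by gcongr
    _ = K' * μ B * μ E + (K' * μ E * ε + ε) := by ring
    _ ≤ K' * μ B * μ E + (K' * μ E + 1) * ε := by
        rw [add_mul, one_mul]

end SGM

namespace SGM

variable {M d : ℕ} {A : Fin M → Matrix (Fin d) (Fin d) ℝ} {s C P : ℝ}
  {μ : Measure (ℕ → Fin M)}

lemma IsTail.inter {E E' : Set (ℕ → Fin M)} (h : IsTail E) (h' : IsTail E') :
    IsTail (E ∩ E') := by
  refine ⟨h.1.inter h'.1, fun n => ?_⟩
  obtain ⟨F, hF, hFe⟩ := h.2 n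
  obtain ⟨F', hF', hFe'⟩ := h'.2 n
  exact ⟨F ∩ F', hF.inter hF', by rw [hFe, hFe', Set.preimage_inter]⟩

lemma IsTail.compl {E : Set (ℕ → Fin M)} (h : IsTail E) : IsTail Eᶜ := by
  refine ⟨h.1.compl, fun n => ?_⟩
  obtain ⟨F, hF, hFe⟩ := h.2 n
  exact ⟨Fᶜ, hF.compl, by rw [hFe, Set.preimage_compl]⟩

lemma IsTail.diff {E E' : Set (ℕ → Fin M)} (h : IsTail E) (h' : IsTail E') :
    IsTail (E \ E') := h.inter h'.compl

lemma IsTail.preimage {E : Set (ℕ → Fin M)} (h : IsTail E) (r : ℕ) :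
    IsTail ((shift (M := M))^[r] ⁻¹' E) := by
  refine ⟨(measurable_shift_iterate r) h.1, fun n => ?_⟩
  obtain ⟨F, hF, hFe⟩ := h.2 n
  refine ⟨(shift (M := M))^[r] ⁻¹' F, (measurable_shift_iterate r) hF, ?_⟩
  rw [hFe, ← Set.preimage_comp, ← Function.iterate_add, ← Set.preimage_comp,
    ← Function.iterate_add, Nat.add_comm]

lemma tail_lb (hs : 0 < s) (hC : 0 < C) (hG : IsGibbs A s C P μ)
    [IsProbabilityMeasure μ] (hinv : MeasurePreserving (shift (M := M)) μ μ)
    {E : Set (ℕ → Fin M)} (hE : IsTail E) (h0 : μ E ≠ 0) :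
    (C ^ 3)⁻¹ ≤ (μ E).toReal := by
  have hb := tail_bound hs hC hG hinv hE hE.1
  rw [Set.inter_self] at hb
  have ht : (μ E).toReal ≤ C ^ 3 * (μ E).toReal * (μ E).toReal := by
    have := ENNReal.toReal_mono ?_ hb
    · rwa [ENNReal.toReal_mul, ENNReal.toReal_mul, ENNReal.toReal_ofReal (by positivity)] at this
    · exact ENNReal.mul_ne_top (ENNReal.mul_ne_top ENNReal.ofReal_ne_top (measure_ne_top _ _))
        (measure_ne_top _ _)
  have htpos : 0 < (μ E).toReal := ENNReal.toReal_pos h0 (measure_ne_top _ _)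
  have hC3 : (0:ℝ) < C ^ 3 := by positivity
  rw [inv_le_iff_one_le_mul₀ hC3]
  nlinarith

lemma tail_trivial (hs : 0 < s) (hC : 0 < C) (hG : IsGibbs A s C P μ)
    [IsProbabilityMeasure μ] (hinv : MeasurePreserving (shift (M := M)) μ μ)
    (herg : ∀ k : ℕ, 1 ≤ k → Ergodic ((shift (M := M))^[k]) μ)
    {E : Set (ℕ → Fin M)} (hE : IsTail E) : μ E = 0 ∨ μ E = 1 := by
  by_contra hcon
  push_neg at hcon
  obtain ⟨hE0, hE1⟩ := hcon
  classical
  set NT : Set ℝ := {x : ℝ | ∃ E' : Set (ℕ → Fin M),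
    IsTail E' ∧ μ E' ≠ 0 ∧ μ E' ≠ 1 ∧ x = (μ E').toReal} with hNT
  have hNTne : NT.Nonempty := ⟨(μ E).toReal, E, hE, hE0, hE1, rfl⟩
  have hC3 : (0:ℝ) < C ^ 3 := by positivity
  have hbdd : BddBelow NT := by
    refine ⟨(C ^ 3)⁻¹, ?_⟩
    rintro x ⟨E', hE', h0, h1, rfl⟩
    exact tail_lb hs hC hG hinv hE' h0
  set ι := sInf NT with hι
  have hι_lb : (C ^ 3)⁻¹ ≤ ι := by
    refine le_csInf hNTne ?_
    rintro x ⟨E', hE', h0, h1, rfl⟩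
    exact tail_lb hs hC hG hinv hE' h0
  have hι_pos : 0 < ι := lt_of_lt_of_le (by positivity) hι_lb
  -- near minimal nontrivial tail set
  obtain ⟨x, hxNT, hxlt⟩ := (csInf_lt_iff hbdd hNTne).mp (by linarith : sInf NT < 2 * ι)
  obtain ⟨E', hE', h0', h1', rfl⟩ := hxNT
  -- atoms
  have hatom : ∀ E'' : Set (ℕ → Fin M), IsTail E'' → μ E'' ≠ 0 → μ E'' ≠ 1 →
      (μ E'').toReal < 2 * ι →
      ∀ G : Set (ℕ → Fin M), IsTail G → G ⊆ E'' → μ G = 0 ∨ μ G = μ E'' := by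
    intro E'' hT h0 h1 hlt G hTG hsub
    by_contra hcon2
    push_neg at hcon2
    obtain ⟨hG0, hGne⟩ := hcon2
    have hGle : μ G ≤ μ E'' := measure_mono hsub
    have hGlt : μ G < μ E'' := lt_of_le_of_ne hGle hGne
    have hdiff_meas := hT.1.diff hTG.1
    have hμdiff : μ (E'' \ G) = μ E'' - μ G :=
      measure_diff hsub hTG.1.nullMeasurableSet (measure_ne_top _ _)
    have hd0 : μ (E'' \ G) ≠ 0 := by
      rw [hμdiff]
      simp only [ne_eq, tsub_eq_zero_iff_le, not_le]
      exact hGlt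
    have hG1 : μ G ≠ 1 := by
      intro h
      rw [h] at hGlt
      exact absurd (lt_of_lt_of_le hGlt prob_le_one) (lt_irrefl _)
    have hd1 : μ (E'' \ G) ≠ 1 := by
      intro h
      have hle : μ (E'' \ G) ≤ μ E'' := measure_mono Set.diff_subset
      rw [h] at hle
      exact h1 (le_antisymm prob_le_one hle)
    have hsplit : (μ E'').toReal = (μ G).toReal + (μ (E'' \ G)).toReal := by
      rw [← ENNReal.toReal_add (measure_ne_top _ _) (measure_ne_top _ _)]
      congr 1
      rw [← measure_union (Disjoint.symm Set.disjoint_sdiff_left) hdiff_meas, Set.union_diff_cancel hsub]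
    have hGlb : ι ≤ (μ G).toReal := csInf_le hbdd ⟨G, hTG, hG0, hG1, rfl⟩
    have hdlb : ι ≤ (μ (E'' \ G)).toReal := csInf_le hbdd ⟨E'' \ G, hT.diff hTG, hd0, hd1, rfl⟩
    linarith
  set a := (μ E').toReal with ha
  have hapos : 0 < a := ENNReal.toReal_pos h0' (measure_ne_top _ _)
  set N := Nat.ceil (1 / a) with hN
  have hNa : 1 < ((N : ℝ) + 1) * a := by
    have h1a : 1 / a ≤ (N : ℝ) := Nat.le_ceil _
    have : 1 ≤ (N:ℝ) * a := by
      rw [div_le_iff₀ hapos] at h1a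
      linarith
    nlinarith
  set Ei : ℕ → Set (ℕ → Fin M) := fun i => (shift (M := M))^[i] ⁻¹' E' with hEi
  have hEi_tail : ∀ i, IsTail (Ei i) := fun i => hE'.preimage i
  have hEi_meas : ∀ i, μ (Ei i) = μ E' := fun i =>
    (hinv.iterate i).measure_preimage hE'.1.nullMeasurableSet
  -- some pair intersects positively
  have hpair : ∃ i j, i < j ∧ j ≤ N ∧ μ (Ei i ∩ Ei j) ≠ 0 := by
    by_contra hcon3
    push_neg at hcon3
    have hdisj : (↑(Finset.range (N + 1)) : Set ℕ).Pairwise (Function.onFun (MeasureTheory.AEDisjoint μ) Ei) := by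
      intro i hi j hj hij
      rcases lt_or_gt_of_ne hij with h | h
      · exact hcon3 i j h (by simp at hj; omega)
      · exact (MeasureTheory.AEDisjoint.symm (hcon3 j i h (by simp at hi; omega)))
    have hsum : μ (⋃ i ∈ Finset.range (N + 1), Ei i) = ∑ i ∈ Finset.range (N + 1), μ (Ei i) :=
      measure_biUnion_finset₀ hdisj (fun i _ => (hEi_tail i).1.nullMeasurableSet)
    have hsum2 : ∑ i ∈ Finset.range (N + 1), μ (Ei i) = (N + 1) * μ E' := by
      rw [Finset.sum_congr rfl fun i _ => hEi_meas i, Finset.sum_const, Finset.card_range,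
        nsmul_eq_mul]
      norm_cast
    have hle1 : μ (⋃ i ∈ Finset.range (N + 1), Ei i) ≤ 1 := prob_le_one
    rw [hsum, hsum2] at hle1
    have hreal : ((N : ℝ) + 1) * a ≤ 1 := by
      have h' := ENNReal.toReal_mono (by simp) hle1
      rw [ENNReal.toReal_mul] at h'
      have hcast : ((N : ENNReal) + 1).toReal = (N : ℝ) + 1 := by
        rw [ENNReal.toReal_add (by simp) (by simp)]
        simp
      rw [hcast] at h'
      simpa using h'
    linarith
  obtain ⟨i, j, hij, hjN, hne0⟩ := hpair
  set r := j - i with hr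
  have hrpos : 1 ≤ r := by omega
  have hjri : j = r + i := by omega
  -- Ei i is an atom
  have hEi_ne0 : μ (Ei i) ≠ 0 := by rw [hEi_meas]; exact h0'
  have hEi_ne1 : μ (Ei i) ≠ 1 := by rw [hEi_meas]; exact h1'
  have hEi_lt : (μ (Ei i)).toReal < 2 * ι := by rw [hEi_meas]; exact hxlt
  have hIJtail : IsTail (Ei i ∩ Ei j) := (hEi_tail i).inter (hEi_tail j)
  have hIJsub : Ei i ∩ Ei j ⊆ Ei i := Set.inter_subset_left
  have hIJ : μ (Ei i ∩ Ei j) = μ (Ei i) := by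
    rcases hatom (Ei i) (hEi_tail i) hEi_ne0 hEi_ne1 hEi_lt (Ei i ∩ Ei j) hIJtail hIJsub with h | h
    · exact absurd h hne0
    · exact h
  -- symmetric difference is null
  have hd1 : μ (Ei i \ Ei j) = 0 := by
    have : Ei i \ Ei j = Ei i \ (Ei i ∩ Ei j) := by
      ext y; simp only [Set.mem_diff, Set.mem_inter_iff]; tauto
    rw [this, measure_diff hIJsub hIJtail.1.nullMeasurableSet (measure_ne_top _ _), hIJ,
      tsub_self]
  have hd2 : μ (Ei j \ Ei i) = 0 := by
    have heq : Ei j \ Ei i = Ei j \ (Ei i ∩ Ei j) := by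
      ext y; simp only [Set.mem_diff, Set.mem_inter_iff]; tauto
    rw [heq, measure_diff Set.inter_subset_right hIJtail.1.nullMeasurableSet (measure_ne_top _ _),
      hIJ, hEi_meas, hEi_meas, tsub_self]
  have hsymm : μ (symmDiff (Ei i) (Ei j)) = 0 := by
    rw [Set.symmDiff_def]
    refine le_antisymm ?_ (by simp)
    calc μ (Ei i \ Ei j ∪ Ei j \ Ei i) ≤ μ (Ei i \ Ei j) + μ (Ei j \ Ei i) := measure_union_le _ _
      _ = 0 := by rw [hd1, hd2, add_zero]
  -- transfer to E' and shift^[r]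
  have hEj_eq : Ei j = (shift (M := M))^[i] ⁻¹' ((shift (M := M))^[r] ⁻¹' E') := by
    rw [hEi, ← Set.preimage_comp, ← Function.iterate_add]
    simp only [hjri]
  have hpre_symm : symmDiff (Ei i) (Ei j)
      = (shift (M := M))^[i] ⁻¹' (symmDiff E' ((shift (M := M))^[r] ⁻¹' E')) := by
    rw [hEj_eq, hEi]
    simp only [Set.symmDiff_def, Set.preimage_union, Set.preimage_diff]
  have hE'symm : μ (symmDiff E' ((shift (M := M))^[r] ⁻¹' E')) = 0 := by
    have := (hinv.iterate i).measure_preimage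
      (hE'.1.symmDiff ((measurable_shift_iterate r) hE'.1)).nullMeasurableSet
    rw [← hpre_symm] at this
    rw [← this, hsymm]
  have hae : (shift (M := M))^[r] ⁻¹' E' =ᵐ[μ] E' := by
    have := (MeasureTheory.measure_symmDiff_eq_zero_iff).mp hE'symm
    exact this.symm
  have herg' := (herg r hrpos).quasiErgodic.ae_empty_or_univ₀ hE'.1.nullMeasurableSet hae
  rcases herg' with h | h
  · exact h0' (by rw [measure_congr h]; simp)
  · exact h1' (by rw [measure_congr h]; simp)

end SGM

namespace SGM

section AbstractHilbert

variable {H : Type*} [NormedAddCommGroup H] [InnerProductSpace ℝ H] [CompleteSpace H]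

local notation "⟪" x ", " y "⟫" => @inner ℝ _ _ x y

lemma hilbert_proj (U : ℕ → H →L[ℝ] H)
    (hiso : ∀ n (f g : H), ⟪U n f, U n g⟫ = ⟪f, g⟫)
    (hcomp : ∀ m n, U (m + n) = (U m).comp (U n))
    (x : H) :
    ∃ h : H,
      Tendsto (fun n => (U n) ((ContinuousLinearMap.adjoint (U n)) x)) atTop (𝓝 h)
      ∧ (∀ m, ∃ g, (U m) g = h)
      ∧ ∀ n y, ⟪x, U n y⟫ = ⟪(U n) ((ContinuousLinearMap.adjoint (U n)) x), U n y⟫ := by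
  set p : ℕ → H := fun n => (U n) ((ContinuousLinearMap.adjoint (U n)) x) with hp
  -- projection identity
  have f1 : ∀ n (y : H), ⟪p n, U n y⟫ = ⟪x, U n y⟫ := by
    intro n y
    calc ⟪p n, U n y⟫ = ⟪(ContinuousLinearMap.adjoint (U n)) x, y⟫ := hiso n _ _
      _ = ⟪x, U n y⟫ := ContinuousLinearMap.adjoint_inner_left _ _ _
  -- ranges
  have f2 : ∀ m n, m ≤ n → ∃ z, p n = (U m) z := by
    intro m n hmn
    obtain ⟨k, rfl⟩ := Nat.le.dest hmn
    exact ⟨(U k) ((ContinuousLinearMap.adjoint (U (m + k))) x), by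
      rw [hp]; simp only [hcomp m k, ContinuousLinearMap.comp_apply]⟩
  -- inner products of p's
  have f3 : ∀ m n, m ≤ n → ⟪p m, p n⟫ = ‖p n‖ ^ 2 := by
    intro m n hmn
    obtain ⟨z, hz⟩ := f2 m n hmn
    have h1 : ⟪p m, p n⟫ = ⟪x, p n⟫ := by rw [hz, f1 m z]
    have h2 : ⟪x, p n⟫ = ⟪p n, p n⟫ := (f1 n _).symm
    rw [h1, h2, real_inner_self_eq_norm_sq]
  -- decreasing norms
  have f4 : ∀ m n, m ≤ n → ‖p n‖ ≤ ‖p m‖ := by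
    intro m n hmn
    have h1 : ‖p n‖ ^ 2 ≤ ‖p m‖ * ‖p n‖ := by
      rw [← f3 m n hmn]
      exact (le_abs_self _).trans (abs_real_inner_le_norm _ _)
    rcases eq_or_lt_of_le (norm_nonneg (p n)) with h | h
    · rw [← h]; exact norm_nonneg _
    · have := mul_le_mul_of_nonneg_right (le_refl ‖p n‖) h.le
      nlinarith
  set c : ℕ → ℝ := fun n => ‖p n‖ with hc
  have hcant : Antitone c := fun m n hmn => f4 m n hmn
  have hcbdd : BddBelow (Set.range c) := ⟨0, by rintro t ⟨n, rfl⟩; exact norm_nonneg _⟩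
  have hctend : Tendsto c atTop (𝓝 (⨅ n, c n)) := tendsto_atTop_ciInf hcant hcbdd
  set L : ℝ := ⨅ n, c n with hL
  have hLle : ∀ n, L ≤ c n := fun n => ciInf_le hcbdd n
  have hL0 : 0 ≤ L := le_ciInf fun n => norm_nonneg _
  -- dist formula
  have fdist : ∀ m n, m ≤ n → dist (p n) (p m) ^ 2 = c m ^ 2 - c n ^ 2 := by
    intro m n hmn
    rw [dist_eq_norm, norm_sub_sq_real, real_inner_comm, f3 m n hmn]
    simp only [hc]
    ring
  -- Cauchy
  have hcauchy : CauchySeq p := by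
    apply cauchySeq_of_le_tendsto_0 (fun N => Real.sqrt (c N ^ 2 - L ^ 2))
    · intro n m N hn hm
      rcases le_total m n with hmn | hnm
      · have h1 := fdist m n hmn
        have h2 : dist (p n) (p m) ^ 2 ≤ c N ^ 2 - L ^ 2 := by
          rw [h1]
          have hcm : c m ≤ c N := hcant hm
          have hLn : L ≤ c n := hLle n
          have h0m : 0 ≤ c m := norm_nonneg _
          nlinarith
        have := Real.sqrt_le_sqrt h2
        rwa [Real.sqrt_sq dist_nonneg] at this
      · have h1 := fdist n m hnm
        have h2 : dist (p n) (p m) ^ 2 ≤ c N ^ 2 - L ^ 2 := by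
          rw [dist_comm, h1]
          have hcn : c n ≤ c N := hcant hn
          have hLm : L ≤ c m := hLle m
          have h0n : 0 ≤ c n := norm_nonneg _
          nlinarith
        have := Real.sqrt_le_sqrt h2
        rwa [Real.sqrt_sq dist_nonneg] at this
    · have h1 : Tendsto (fun N => c N ^ 2 - L ^ 2) atTop (𝓝 (L ^ 2 - L ^ 2)) :=
        ((hctend.pow 2).sub tendsto_const_nhds)
      rw [sub_self] at h1
      have h2 := (Real.continuous_sqrt.tendsto 0).comp h1
      rwa [Real.sqrt_zero] at h2
  obtain ⟨h, hh⟩ := cauchySeq_tendsto_of_complete hcauchy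
  refine ⟨h, hh, ?_, fun n y => (f1 n y).symm⟩
  intro m
  -- h is in the (closed) range of U m
  have hisom : Isometry (U m) := by
    apply AddMonoidHomClass.isometry_of_norm
    intro z
    have := hiso m z z
    rw [real_inner_self_eq_norm_sq, real_inner_self_eq_norm_sq] at this
    nlinarith [norm_nonneg ((U m) z), norm_nonneg z]
  have hclosed : IsClosed (Set.range (U m)) := hisom.isClosedEmbedding.isClosed_range
  have hmem : h ∈ Set.range (U m) := by
    apply hclosed.mem_of_tendsto hh
    filter_upwards [eventually_ge_atTop m] with n hn
    obtain ⟨z, hz⟩ := f2 m n hn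
    exact ⟨z, hz.symm⟩
  exact hmem

end AbstractHilbert

end SGM

namespace SGM

variable {M : ℕ} {μ : Measure (ℕ → Fin M)} [IsProbabilityMeasure μ]

local notation "⟪" x ", " y "⟫" => @inner ℝ _ _ x y

/-- Koopman operator of `shift^[n]` as a linear isometry on L². -/
noncomputable def koopLI (hinv : MeasurePreserving (shift (M := M)) μ μ) (n : ℕ) :
    Lp ℝ 2 μ →ₗᵢ[ℝ] Lp ℝ 2 μ where
  toLinearMap :=
    { toFun := Lp.compMeasurePreserving ((shift (M := M))^[n]) (hinv.iterate n)
      map_add' := map_add _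
      map_smul' := by
        intro c g
        simp only [RingHom.id_apply]
        apply Lp.ext
        have h1 := Lp.coeFn_compMeasurePreserving (μ := μ) (c • g) (hinv.iterate n)
        have h2 := Lp.coeFn_compMeasurePreserving (μ := μ) g (hinv.iterate n)
        have h3 : (↑↑(c • g) : (ℕ → Fin M) → ℝ) =ᵐ[μ] c • ((↑↑g : (ℕ → Fin M) → ℝ)) :=
          Lp.coeFn_smul c g
        have h4 := (hinv.iterate n).quasiMeasurePreserving.ae_eq_comp h3
        refine h1.trans (h4.trans ?_)
        have h5 : (c • ((↑↑g : (ℕ → Fin M) → ℝ))) ∘ (shift (M := M))^[n]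
            = c • (((↑↑g : (ℕ → Fin M) → ℝ)) ∘ (shift (M := M))^[n]) := rfl
        rw [h5]
        refine (Filter.EventuallyEq.trans ?_ (Lp.coeFn_smul c _).symm)
        exact h2.symm.mono fun a ha => by
          simp only [Pi.smul_apply]
          rw [← ha] }
  norm_map' := fun g =>
    (Lp.isometry_compMeasurePreserving (hinv.iterate n)).norm_map_of_map_zero (map_zero _) g

noncomputable def koopCLM (hinv : MeasurePreserving (shift (M := M)) μ μ) (n : ℕ) :
    Lp ℝ 2 μ →L[ℝ] Lp ℝ 2 μ := (koopLI hinv n).toContinuousLinearMap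

lemma koopCLM_apply (hinv : MeasurePreserving (shift (M := M)) μ μ) (n : ℕ) (g : Lp ℝ 2 μ) :
    koopCLM hinv n g = Lp.compMeasurePreserving ((shift (M := M))^[n]) (hinv.iterate n) g := rfl

lemma koopCLM_coeFn (hinv : MeasurePreserving (shift (M := M)) μ μ) (n : ℕ) (g : Lp ℝ 2 μ) :
    (↑↑(koopCLM hinv n g) : (ℕ → Fin M) → ℝ)
      =ᵐ[μ] (↑↑g : (ℕ → Fin M) → ℝ) ∘ (shift (M := M))^[n] :=
  Lp.coeFn_compMeasurePreserving g (hinv.iterate n)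

lemma koopCLM_inner (hinv : MeasurePreserving (shift (M := M)) μ μ) (n : ℕ)
    (f g : Lp ℝ 2 μ) : ⟪koopCLM hinv n f, koopCLM hinv n g⟫ = ⟪f, g⟫ :=
  LinearIsometry.inner_map_map (koopLI hinv n) f g

lemma koopCLM_comp (hinv : MeasurePreserving (shift (M := M)) μ μ) (m n : ℕ) :
    koopCLM hinv (m + n) = (koopCLM hinv m).comp (koopCLM hinv n) := by
  apply ContinuousLinearMap.ext
  intro g
  apply Lp.ext
  have h1 := koopCLM_coeFn hinv (m + n) g
  have h2 := koopCLM_coeFn hinv n g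
  have h3 := koopCLM_coeFn hinv m (koopCLM hinv n g)
  have h4 := (hinv.iterate m).quasiMeasurePreserving.ae_eq_comp h2
  refine h1.trans (Filter.EventuallyEq.trans ?_ (h3.trans h4).symm)
  apply Filter.EventuallyEq.of_eq
  funext x
  simp only [Function.comp_apply]
  rw [Nat.add_comm m n, Function.iterate_add_apply]

/-- The constant function 1 in L². -/
noncomputable def oneL (μ : Measure (ℕ → Fin M)) [IsProbabilityMeasure μ] : Lp ℝ 2 μ :=
  indicatorConstLp 2 MeasurableSet.univ (measure_ne_top μ _) (1 : ℝ)

lemma oneL_coe : (↑↑(oneL μ) : (ℕ → Fin M) → ℝ) =ᵐ[μ] fun _ => (1 : ℝ) :=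
  indicatorConstLp_coeFn.trans (Filter.EventuallyEq.of_eq (by simp))

lemma koopCLM_one (hinv : MeasurePreserving (shift (M := M)) μ μ) (n : ℕ) :
    koopCLM hinv n (oneL μ) = oneL μ := by
  apply Lp.ext
  have h1 := koopCLM_coeFn hinv n (oneL μ)
  have h2 := (hinv.iterate n).quasiMeasurePreserving.ae_eq_comp
    (oneL_coe (μ := μ))
  exact (h1.trans h2).trans oneL_coe.symm

/-- Indicator of a measurable set, as an element of L². -/
noncomputable def indL (μ : Measure (ℕ → Fin M)) [IsProbabilityMeasure μ]
    {X : Set (ℕ → Fin M)} (hX : MeasurableSet X) : Lp ℝ 2 μ :=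
  indicatorConstLp 2 hX (measure_ne_top μ X) (1 : ℝ)

lemma indL_univ : indL μ MeasurableSet.univ = oneL μ := rfl

lemma inner_L2 (f g : Lp ℝ 2 μ) :
    ⟪f, g⟫ = ∫ a, ((↑↑f : (ℕ → Fin M) → ℝ) a) * ((↑↑g : (ℕ → Fin M) → ℝ) a) ∂μ := by
  rw [L2.inner_def]
  congr 1
  funext a
  simp [mul_comm]

lemma inner_ind_koop (hinv : MeasurePreserving (shift (M := M)) μ μ)
    {X Y : Set (ℕ → Fin M)} (hX : MeasurableSet X) (hY : MeasurableSet Y) (n : ℕ) :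
    ⟪indL μ hX, koopCLM hinv n (indL μ hY)⟫
      = (μ (X ∩ (shift (M := M))^[n] ⁻¹' Y)).toReal := by
  rw [inner_L2]
  have h1 : (↑↑(indL μ hX) : (ℕ → Fin M) → ℝ) =ᵐ[μ] X.indicator fun _ => 1 :=
    indicatorConstLp_coeFn
  have h2 : (↑↑(koopCLM hinv n (indL μ hY)) : (ℕ → Fin M) → ℝ)
      =ᵐ[μ] (Y.indicator fun _ => (1:ℝ)) ∘ (shift (M := M))^[n] :=
    (koopCLM_coeFn hinv n _).trans
      ((hinv.iterate n).quasiMeasurePreserving.ae_eq_comp indicatorConstLp_coeFn)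
  have h3 : (fun a => ((↑↑(indL μ hX) : (ℕ → Fin M) → ℝ) a)
        * ((↑↑(koopCLM hinv n (indL μ hY)) : (ℕ → Fin M) → ℝ) a))
      =ᵐ[μ] (X ∩ (shift (M := M))^[n] ⁻¹' Y).indicator (1 : (ℕ → Fin M) → ℝ) := by
    filter_upwards [h1, h2] with a ha1 ha2
    rw [ha1, ha2]
    by_cases hx : a ∈ X <;> by_cases hy : (shift (M := M))^[n] a ∈ Y <;>
      simp [Set.indicator_apply, hx, hy, Set.mem_preimage, Set.mem_inter_iff]
  rw [integral_congr_ae h3]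
  exact integral_indicator_one (hX.inter ((measurable_shift_iterate n) hY))

lemma inner_ind_one {X : Set (ℕ → Fin M)} (hinv : MeasurePreserving (shift (M := M)) μ μ)
    (hX : MeasurableSet X) :
    ⟪indL μ hX, oneL μ⟫ = (μ X).toReal := by
  have := inner_ind_koop hinv hX MeasurableSet.univ 0
  rw [indL_univ, koopCLM_one] at this
  simpa using this

lemma inner_one_koop_ind {Y : Set (ℕ → Fin M)} (hinv : MeasurePreserving (shift (M := M)) μ μ)
    (hY : MeasurableSet Y) (n : ℕ) :
    ⟪oneL μ, koopCLM hinv n (indL μ hY)⟫ = (μ Y).toReal := by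
  have := inner_ind_koop hinv MeasurableSet.univ hY n
  rw [indL_univ] at this
  rw [this, Set.univ_inter]
  congr 1
  exact (hinv.iterate n).measure_preimage hY.nullMeasurableSet

lemma inner_one_one : ⟪oneL μ, oneL μ⟫ = 1 := by
  rw [inner_L2]
  have h3 : (fun a => ((↑↑(oneL μ) : (ℕ → Fin M) → ℝ) a) * ((↑↑(oneL μ) : (ℕ → Fin M) → ℝ) a))
      =ᵐ[μ] fun _ => (1:ℝ) := by
    filter_upwards [oneL_coe (μ := μ)] with a ha
    rw [ha]; simp
  rw [integral_congr_ae h3]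
  simp

end SGM

namespace SGM

variable {M d : ℕ} {A : Fin M → Matrix (Fin d) (Fin d) ℝ} {s C P : ℝ}
  {μ : Measure (ℕ → Fin M)} [IsProbabilityMeasure μ]

lemma zero_one_of_ae_preimages (hs : 0 < s) (hC : 0 < C) (hG : IsGibbs A s C P μ)
    (hinv : MeasurePreserving (shift (M := M)) μ μ)
    (herg : ∀ k : ℕ, 1 ≤ k → Ergodic ((shift (M := M))^[k]) μ)
    {Aset : Set (ℕ → Fin M)}
    (F : ℕ → Set (ℕ → Fin M)) (hF : ∀ m, MeasurableSet (F m))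
    (hae : ∀ m, μ (symmDiff Aset ((shift (M := M))^[m] ⁻¹' F m)) = 0) :
    μ Aset = 0 ∨ μ Aset = 1 := by
  set Am : ℕ → Set (ℕ → Fin M) := fun m => (shift (M := M))^[m] ⁻¹' F m with hAm
  set B : ℕ → Set (ℕ → Fin M) := fun N => ⋃ m, ⋃ (_ : N ≤ m), Am m with hB
  set E : Set (ℕ → Fin M) := ⋂ N, B N with hEdef
  have hAm_meas : ∀ m, MeasurableSet (Am m) := fun m =>
    (measurable_shift_iterate m) (hF m)
  have hE_tail : IsTail E := by
    constructor
    · exact MeasurableSet.iInter fun N => MeasurableSet.iUnion fun m =>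
        MeasurableSet.iUnion fun _ => hAm_meas m
    · intro n
      refine ⟨⋂ N, ⋃ m, ⋃ (_ : N ≤ m ∧ n ≤ m), (shift (M := M))^[m - n] ⁻¹' F m,
        MeasurableSet.iInter fun N => MeasurableSet.iUnion fun m =>
          MeasurableSet.iUnion fun _ => (measurable_shift_iterate (m - n)) (hF m), ?_⟩
      ext y
      simp only [hEdef, hB, hAm, Set.mem_iInter, Set.mem_iUnion, Set.mem_preimage]
      constructor
      · intro hy N
        obtain ⟨m, hm, hmem⟩ := hy (max N n)
        refine ⟨m, ⟨le_trans (le_max_left N n) hm, le_trans (le_max_right N n) hm⟩, ?_⟩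
        have harith : (shift (M := M))^[m - n] ((shift (M := M))^[n] y)
            = (shift (M := M))^[m] y := by
          rw [← Function.iterate_add_apply]
          congr 1
          omega
        rwa [harith]
      · intro hy N
        obtain ⟨m, ⟨hm1, hm2⟩, hmem⟩ := hy N
        refine ⟨m, hm1, ?_⟩
        have harith : (shift (M := M))^[m - n] ((shift (M := M))^[n] y)
            = (shift (M := M))^[m] y := by
          rw [← Function.iterate_add_apply]
          congr 1
          omega
        rwa [harith] at hmem
  have hAB : ∀ N, μ (symmDiff Aset (B N)) = 0 := by
    intro N
    have hsub : symmDiff Aset (B N) ⊆ ⋃ m, symmDiff Aset (Am m) := by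
      intro y hy
      rcases Set.mem_symmDiff.mp hy with ⟨hyA, hyB⟩ | ⟨hyB, hyA⟩
      · refine Set.mem_iUnion.mpr ⟨N, Set.mem_symmDiff.mpr (Or.inl ⟨hyA, ?_⟩)⟩
        intro hmem
        exact hyB (Set.mem_iUnion.mpr ⟨N, Set.mem_iUnion.mpr ⟨le_refl N, hmem⟩⟩)
      · simp only [hB, Set.mem_iUnion] at hyB
        obtain ⟨m, _, hmem⟩ := hyB
        exact Set.mem_iUnion.mpr ⟨m, Set.mem_symmDiff.mpr (Or.inr ⟨hmem, hyA⟩)⟩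
    exact measure_mono_null hsub (measure_iUnion_null hae)
  have hAE : μ (symmDiff Aset E) = 0 := by
    have hsub : symmDiff Aset E ⊆ ⋃ N, symmDiff Aset (B N) := by
      intro y hy
      rcases Set.mem_symmDiff.mp hy with ⟨hyA, hyE⟩ | ⟨hyE, hyA⟩
      · simp only [hEdef, Set.mem_iInter, not_forall] at hyE
        obtain ⟨N, hN⟩ := hyE
        exact Set.mem_iUnion.mpr ⟨N, Set.mem_symmDiff.mpr (Or.inl ⟨hyA, hN⟩)⟩
      · have : y ∈ B 0 := Set.mem_iInter.mp hyE 0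
        exact Set.mem_iUnion.mpr ⟨0, Set.mem_symmDiff.mpr (Or.inr ⟨this, hyA⟩)⟩
    exact measure_mono_null hsub (measure_iUnion_null hAB)
  have hcongr : μ Aset = μ E := measure_congr (measure_symmDiff_eq_zero_iff.mp hAE)
  rw [hcongr]
  exact tail_trivial hs hC hG hinv herg hE_tail

lemma exists_const_of_ranges (hs : 0 < s) (hC : 0 < C) (hG : IsGibbs A s C P μ)
    (hinv : MeasurePreserving (shift (M := M)) μ μ)
    (herg : ∀ k : ℕ, 1 ≤ k → Ergodic ((shift (M := M))^[k]) μ)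
    (h : Lp ℝ 2 μ) (hr : ∀ m : ℕ, ∃ g : Lp ℝ 2 μ, koopCLM hinv m g = h) :
    ∃ c : ℝ, (↑↑h : (ℕ → Fin M) → ℝ) =ᵐ[μ] fun _ => c := by
  choose g hg using hr
  have hh : AEMeasurable (↑↑h : (ℕ → Fin M) → ℝ) μ := (Lp.aestronglyMeasurable h).aemeasurable
  set hb : (ℕ → Fin M) → ℝ := hh.mk _ with hhb
  have hb_meas : Measurable hb := hh.measurable_mk
  have hb_ae : (↑↑h : (ℕ → Fin M) → ℝ) =ᵐ[μ] hb := hh.ae_eq_mk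
  have hgm : ∀ m, AEMeasurable (↑↑(g m) : (ℕ → Fin M) → ℝ) μ := fun m =>
    (Lp.aestronglyMeasurable _).aemeasurable
  set gb : ℕ → (ℕ → Fin M) → ℝ := fun m => (hgm m).mk _ with hgb
  have hgb_meas : ∀ m, Measurable (gb m) := fun m => (hgm m).measurable_mk
  have hcomp : ∀ m, hb =ᵐ[μ] (gb m) ∘ ((shift (M := M))^[m]) := by
    intro m
    have e0 : (↑↑h : (ℕ → Fin M) → ℝ) =ᵐ[μ] (↑↑(koopCLM hinv m (g m)) : (ℕ → Fin M) → ℝ) := by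
      rw [hg m]
    have e1 := koopCLM_coeFn hinv m (g m)
    have e2 := (hinv.iterate m).quasiMeasurePreserving.ae_eq_comp ((hgm m).ae_eq_mk)
    exact hb_ae.symm.trans ((e0.trans e1).trans e2)
  have h01 : ∀ c : ℝ, μ {z | c < hb z} = 0 ∨ μ {z | c < hb z} = 1 := by
    intro c
    apply zero_one_of_ae_preimages hs hC hG hinv herg
      (F := fun m => {u | c < gb m u})
      (fun m => measurableSet_lt measurable_const (hgb_meas m))
    intro m
    have hne : μ {z | ¬ (hb z = (gb m ∘ (shift (M := M))^[m]) z)} = 0 := ae_iff.mp (hcomp m)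
    apply measure_mono_null ?_ hne
    intro z hz
    rcases Set.mem_symmDiff.mp hz with ⟨hz1, hz2⟩ | ⟨hz1, hz2⟩
    · intro heq
      simp only [Set.mem_setOf_eq] at hz1
      have heq' : hb z = gb m ((shift (M := M))^[m] z) := heq
      apply hz2
      simp only [Set.mem_preimage, Set.mem_setOf_eq]
      rw [← heq']
      exact hz1
    · intro heq
      simp only [Set.mem_preimage, Set.mem_setOf_eq] at hz1
      have heq' : hb z = gb m ((shift (M := M))^[m] z) := heq
      apply hz2
      simp only [Set.mem_setOf_eq]
      rw [heq']
      exact hz1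
  set Sset : Set ℝ := {c | μ {z | c < hb z} = 0} with hSset
  have hSne : Sset.Nonempty := by
    by_contra hS
    rw [Set.not_nonempty_iff_eq_empty] at hS
    have hall : ∀ k : ℕ, μ {z | (k : ℝ) < hb z} = 1 := by
      intro k
      rcases h01 (k : ℝ) with h | h
      · exact absurd (show (k:ℝ) ∈ Sset from h) (by rw [hS]; exact Set.notMem_empty _)
      · exact h
    have hempty : ⋂ k : ℕ, {z | (k : ℝ) < hb z} = ∅ := by
      ext z
      simp only [Set.mem_iInter, Set.mem_setOf_eq, Set.mem_empty_iff_false, iff_false, not_forall,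
        not_lt]
      obtain ⟨k, hk⟩ := exists_nat_gt (hb z)
      exact ⟨k, hk.le⟩
    have hanti : Antitone fun k : ℕ => {z | (k : ℝ) < hb z} := by
      intro k k' hkk' z hz
      simp only [Set.mem_setOf_eq] at hz ⊢
      have : (k : ℝ) ≤ (k' : ℝ) := by exact_mod_cast hkk'
      linarith
    have htd := tendsto_measure_iInter_atTop (μ := μ)
      (fun k => (measurableSet_lt measurable_const hb_meas).nullMeasurableSet)
      hanti ⟨0, measure_ne_top _ _⟩
    rw [hempty, measure_empty] at htd
    have : (fun k : ℕ => μ {z | (k : ℝ) < hb z}) = fun _ => (1 : ENNReal) := funext hall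
    rw [show (⇑μ ∘ fun k : ℕ => {z | (k : ℝ) < hb z}) = fun k : ℕ => μ {z | (k : ℝ) < hb z}
      from rfl, this] at htd
    exact one_ne_zero (tendsto_nhds_unique tendsto_const_nhds htd)
  have hSbdd : BddBelow Sset := by
    have hU : ⋃ k : ℕ, {z | -(k : ℝ) < hb z} = Set.univ := by
      ext z
      simp only [Set.mem_iUnion, Set.mem_setOf_eq, Set.mem_univ, iff_true]
      obtain ⟨k, hk⟩ := exists_nat_gt (-(hb z))
      exact ⟨k, by linarith⟩
    have hmono : Monotone fun k : ℕ => {z | -(k : ℝ) < hb z} := by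
      intro k k' hkk' z hz
      simp only [Set.mem_setOf_eq] at hz ⊢
      have : (k : ℝ) ≤ (k' : ℝ) := by exact_mod_cast hkk'
      linarith
    have htd := tendsto_measure_iUnion_atTop (μ := μ) hmono
    rw [hU, measure_univ] at htd
    have hex : ∃ k : ℕ, μ {z | -(k : ℝ) < hb z} ≠ 0 := by
      by_contra hno
      push_neg at hno
      have : (fun k : ℕ => μ {z | -(k : ℝ) < hb z}) = fun _ => (0 : ENNReal) := funext hno
      rw [show (⇑μ ∘ fun k : ℕ => {z | -(k : ℝ) < hb z}) = fun k : ℕ => μ {z | -(k : ℝ) < hb z}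
        from rfl, this] at htd
      exact one_ne_zero (tendsto_nhds_unique htd tendsto_const_nhds)
    obtain ⟨k, hk⟩ := hex
    refine ⟨-(k : ℝ), ?_⟩
    intro c hc
    by_contra hlt
    push_neg at hlt
    apply hk
    apply measure_mono_null ?_ hc
    intro z hz
    simp only [Set.mem_setOf_eq] at hz ⊢
    linarith
  set cst := sInf Sset with hcst
  have hup : μ {z | cst < hb z} = 0 := by
    have hsub : {z | cst < hb z} ⊆ ⋃ k : ℕ, {z | cst + 1 / ((k : ℝ) + 1) < hb z} := by
      intro z hz
      simp only [Set.mem_setOf_eq] at hz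
      obtain ⟨k, hk⟩ := exists_nat_one_div_lt (sub_pos.mpr hz)
      exact Set.mem_iUnion.mpr ⟨k, by simp only [Set.mem_setOf_eq]; linarith⟩
    refine measure_mono_null hsub (measure_iUnion_null fun k => ?_)
    have hklt : cst < cst + 1 / ((k : ℝ) + 1) := by
      have : (0:ℝ) < 1 / ((k : ℝ) + 1) := by positivity
      linarith
    obtain ⟨t, htS, htlt⟩ := (csInf_lt_iff hSbdd hSne).mp hklt
    refine measure_mono_null ?_ htS
    intro z hz
    simp only [Set.mem_setOf_eq] at hz ⊢
    linarith
  have hdown : μ {z | hb z < cst} = 0 := by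
    have hsub : {z | hb z < cst} ⊆ ⋃ k : ℕ, {z | hb z ≤ cst - 1 / ((k : ℝ) + 1)} := by
      intro z hz
      simp only [Set.mem_setOf_eq] at hz
      obtain ⟨k, hk⟩ := exists_nat_one_div_lt (sub_pos.mpr hz)
      exact Set.mem_iUnion.mpr ⟨k, by simp only [Set.mem_setOf_eq]; linarith⟩
    refine measure_mono_null hsub (measure_iUnion_null fun k => ?_)
    have hnotS : cst - 1 / ((k : ℝ) + 1) ∉ Sset := by
      intro hmem
      have := csInf_le hSbdd hmem
      have hpos : (0:ℝ) < 1 / ((k : ℝ) + 1) := by positivity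
      rw [← hcst] at this
      linarith
    have h1 : μ {z | cst - 1 / ((k : ℝ) + 1) < hb z} = 1 := by
      rcases h01 (cst - 1 / ((k : ℝ) + 1)) with h | h
      · exact absurd h hnotS
      · exact h
    have hcompl : {z | hb z ≤ cst - 1 / ((k : ℝ) + 1)}
        = {z | cst - 1 / ((k : ℝ) + 1) < hb z}ᶜ := by
      ext z; simp [not_lt]
    rw [hcompl, measure_compl (measurableSet_lt measurable_const hb_meas) (measure_ne_top _ _),
      h1, measure_univ, tsub_self]
  refine ⟨cst, hb_ae.trans ?_⟩
  have hne : μ {z | hb z ≠ cst} = 0 := by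
    apply measure_mono_null ?_ (measure_union_null hup hdown)
    intro z hz
    simp only [Set.mem_setOf_eq] at hz
    rcases lt_or_gt_of_ne hz with h | h
    · exact Or.inr h
    · exact Or.inl h
  rw [Filter.EventuallyEq, ae_iff]
  simpa using hne

end SGM

section Main

local notation "⟪" x ", " y "⟫" => @inner ℝ _ _ x y

open SGM in
/-- a totally ergodic Gibbs measure is mixing. -/
theorem stmt_5 {M d : ℕ} (hM : 2 ≤ M)
    (A : Fin M → Matrix (Fin d) (Fin d) ℝ) (s : ℝ) (hs : 0 < s)
    (μ : Measure (ℕ → Fin M)) [IsProbabilityMeasure μ]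
    (hinv : MeasurePreserving (shift (M := M)) μ μ)
    (C P : ℝ) (hC : 0 < C) (hG : IsGibbs A s C P μ)
    (herg : ∀ k : ℕ, 1 ≤ k → Ergodic ((shift (M := M))^[k]) μ) :
    ∀ X Y : Set (ℕ → Fin M), MeasurableSet X → MeasurableSet Y →
      Filter.Tendsto (fun n : ℕ => μ (X ∩ shift^[n] ⁻¹' Y)) Filter.atTop (nhds (μ X * μ Y)) := by
  intro X Y hX hY
  classical
  set x := indL μ hX with hxdef
  set y := indL μ hY with hydef
  obtain ⟨h, hhtd, hranges, hf1⟩ :=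
    hilbert_proj (koopCLM hinv) (koopCLM_inner hinv) (koopCLM_comp hinv) x
  set pfun : ℕ → Lp ℝ 2 μ :=
    fun n => (koopCLM hinv n) ((ContinuousLinearMap.adjoint (koopCLM hinv n)) x) with hpfun
  obtain ⟨c, hc⟩ := exists_const_of_ranges hs hC hG hinv herg h hranges
  have hone : h = c • oneL μ := by
    apply MeasureTheory.Lp.ext
    refine hc.trans (Filter.EventuallyEq.trans ?_ (Lp.coeFn_smul c (oneL μ)).symm)
    exact (oneL_coe (μ := μ)).symm.mono fun a ha => by
      simp only [Pi.smul_apply, smul_eq_mul]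
      rw [← ha]
      simp
  -- identify the constant
  have e1 : ∀ n, ⟪pfun n, oneL μ⟫ = (μ X).toReal := by
    intro n
    have h0 := hf1 n (oneL μ)
    rw [koopCLM_one] at h0
    rw [hpfun]
    rw [← h0]
    exact inner_ind_one hinv hX
  have e2 : Tendsto (fun n => ⟪pfun n, oneL μ⟫) atTop (𝓝 ⟪h, oneL μ⟫) :=
    hhtd.inner tendsto_const_nhds
  have e3 : ⟪h, oneL μ⟫ = (μ X).toReal := by
    have : (fun n => ⟪pfun n, oneL μ⟫) = fun _ => (μ X).toReal := funext e1
    rw [this] at e2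
    exact tendsto_nhds_unique e2 tendsto_const_nhds
  have hc_eq : c = (μ X).toReal := by
    rw [← e3, hone, real_inner_smul_left, inner_one_one, mul_one]
  -- main real convergence
  have key : ∀ n, (μ (X ∩ (shift (M := M))^[n] ⁻¹' Y)).toReal
      = ⟪pfun n - h, koopCLM hinv n y⟫ + c * (μ Y).toReal := by
    intro n
    rw [← inner_ind_koop hinv hX hY n, hf1 n y, inner_sub_left]
    have hY2 : ⟪h, koopCLM hinv n y⟫ = c * (μ Y).toReal := by
      rw [hone, real_inner_smul_left, inner_one_koop_ind hinv hY n]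
    rw [hY2]
    ring
  have t1 : Tendsto (fun n => ⟪pfun n - h, koopCLM hinv n y⟫) atTop (𝓝 0) := by
    have hbnd : ∀ n, ‖⟪pfun n - h, koopCLM hinv n y⟫‖ ≤ ‖pfun n - h‖ * ‖y‖ := by
      intro n
      rw [Real.norm_eq_abs]
      calc |⟪pfun n - h, koopCLM hinv n y⟫| ≤ ‖pfun n - h‖ * ‖koopCLM hinv n y‖ :=
            abs_real_inner_le_norm _ _
        _ = ‖pfun n - h‖ * ‖y‖ := by
            congr 1
            exact (koopLI hinv n).norm_map y
    have hn0 : Tendsto (fun n => ‖pfun n - h‖) atTop (𝓝 0) :=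
      tendsto_iff_norm_sub_tendsto_zero.mp hhtd
    have hg0 : Tendsto (fun n => ‖pfun n - h‖ * ‖y‖) atTop (𝓝 0) := by
      have := hn0.mul_const ‖y‖
      rwa [zero_mul] at this
    exact squeeze_zero_norm hbnd hg0
  have hreal : Tendsto (fun n => (μ (X ∩ (shift (M := M))^[n] ⁻¹' Y)).toReal) atTop
      (𝓝 ((μ X).toReal * (μ Y).toReal)) := by
    have htot := t1.add (tendsto_const_nhds (x := c * (μ Y).toReal) (f := atTop))
    rw [zero_add] at htot
    have hcongr : (fun n => ⟪pfun n - h, koopCLM hinv n y⟫ + c * (μ Y).toReal)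
        = fun n => (μ (X ∩ (shift (M := M))^[n] ⁻¹' Y)).toReal := funext fun n => (key n).symm
    rw [hcongr, hc_eq] at htot
    exact htot
  -- back to ENNReal
  have hofreal := (ENNReal.continuous_ofReal.tendsto _).comp hreal
  have hfun : (fun n => ENNReal.ofReal ((μ (X ∩ (shift (M := M))^[n] ⁻¹' Y)).toReal))
      = fun n => μ (X ∩ (shift (M := M))^[n] ⁻¹' Y) :=
    funext fun n => ENNReal.ofReal_toReal (measure_ne_top _ _)
  have hlim : ENNReal.ofReal ((μ X).toReal * (μ Y).toReal) = μ X * μ Y := by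
    rw [ENNReal.ofReal_mul ENNReal.toReal_nonneg, ENNReal.ofReal_toReal (measure_ne_top _ _),
      ENNReal.ofReal_toReal (measure_ne_top _ _)]
  rw [show (fun n => ENNReal.ofReal ((μ (X ∩ (shift (M := M))^[n] ⁻¹' Y)).toReal))
      = (ENNReal.ofReal ∘ fun n => (μ (X ∩ (shift (M := M))^[n] ⁻¹' Y)).toReal) from rfl]
    at hfun
  rw [← hfun, ← hlim]
  exact hofreal

end Main
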